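/- arXiv:1701.02809 — 6 statements merged into one kernel-verified Lean document; each statement's English description precedes it below -/
import Mathlib

section
/- Let r ≥ 100 be a real number, let p_L > 0 and p be reals with 0 < p ≤ 0.7·p_L, and set ε₁ = 3·p_L/√r and ε₂ = 2/√r. Then for every real p̂_L with |p̂_L − p_L| ≤ ε₁ and every real δ with |δ| ≤ ε₂, the quantity (p/p̂_L + δ)·p_L − p satisfies |(p/p̂_L + δ)·p_L − p| ≤ 5·p_L/√r. -/
theorem iterative_estimation_error_bound
    (r p_L p : ℝ) (hr : 100 ≤ r) (hpL : 0 < p_L) (hp : 0 < p)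
    (hple : p ≤ 0.7 * p_L)
    (ε₁ ε₂ : ℝ) (hε₁ : ε₁ = 3 * p_L / Real.sqrt r) (hε₂ : ε₂ = 2 / Real.sqrt r) :
    ∀ phatL : ℝ, |phatL - p_L| ≤ ε₁ → ∀ δ : ℝ, |δ| ≤ ε₂ →
      |(p / phatL + δ) * p_L - p| ≤ 5 * p_L / Real.sqrt r := by
  intro phatL h1 δ h2
  set s := Real.sqrt r with hs
  have hs10 : (10 : ℝ) ≤ s := by
    have : Real.sqrt 100 ≤ s := Real.sqrt_le_sqrt hr
    rwa [show (100:ℝ) = 10^2 by norm_num, Real.sqrt_sq (by norm_num)] at this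
  have hs0 : (0 : ℝ) < s := by linarith
  have hε₁le : ε₁ ≤ 0.3 * p_L := by
    rw [hε₁, div_le_iff₀ hs0]; nlinarith
  have h1' := abs_le.mp h1
  have hph : 0.7 * p_L ≤ phatL := by linarith [h1'.1]
  have hph0 : 0 < phatL := by linarith
  have key : (p / phatL + δ) * p_L - p = p * (p_L - phatL) / phatL + δ * p_L := by
    field_simp; ring
  rw [key]
  have hA : |p * (p_L - phatL) / phatL| ≤ ε₁ := by
    rw [abs_div, abs_mul, abs_of_pos hph0, abs_of_pos hp, div_le_iff₀ hph0]
    have hsub : |p_L - phatL| ≤ ε₁ := by rw [abs_sub_comm]; exact h1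
    have hε₁0 : 0 ≤ ε₁ := le_trans (abs_nonneg _) h1
    nlinarith [abs_nonneg (p_L - phatL)]
  have hB : |δ * p_L| ≤ 2 * p_L / s := by
    rw [abs_mul, abs_of_pos hpL]
    have h2' : |δ| ≤ 2 / s := hε₂ ▸ h2
    calc |δ| * p_L ≤ (2 / s) * p_L := mul_le_mul_of_nonneg_right h2' hpL.le
      _ = 2 * p_L / s := by ring
  calc |p * (p_L - phatL) / phatL + δ * p_L|
      ≤ |p * (p_L - phatL) / phatL| + |δ * p_L| := abs_add_le _ _
    _ ≤ ε₁ + 2 * p_L / s := add_le_add hA hB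
    _ = 5 * p_L / s := by rw [hε₁]; ring
end

section
/- Let 0 < p < 1 and r > 0 be reals. Then 6√2·√(p·√p·(1−√p)/r) ≤ 3·√(p·(1−p)/r) if and only if p ≤ 1/49. -/
theorem two_step_better_than_order_statistics_iff
    (p r : ℝ) (hp0 : 0 < p) (hp1 : p < 1) (hr : 0 < r) :
    6 * Real.sqrt 2 * Real.sqrt (p * Real.sqrt p * (1 - Real.sqrt p) / r)
      ≤ 3 * Real.sqrt (p * (1 - p) / r) ↔ p ≤ 1 / 49 := by
  set s := Real.sqrt p with hsdef
  have hs0 : 0 < s := Real.sqrt_pos.mpr hp0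
  have hs1 : s < 1 := by
    rw [hsdef, show (1:ℝ) = Real.sqrt 1 by simp]
    exact Real.sqrt_lt_sqrt hp0.le hp1
  have hs2 : s ^ 2 = p := Real.sq_sqrt hp0.le
  have h72 : (6:ℝ) * Real.sqrt 2 = Real.sqrt 72 := by
    rw [show (72:ℝ) = 6^2*2 by norm_num, Real.sqrt_mul (by positivity), Real.sqrt_sq (by norm_num)]
  have h9 : (3:ℝ) = Real.sqrt 9 := by
    rw [show (9:ℝ) = 3^2 by norm_num, Real.sqrt_sq (by norm_num)]
  rw [h72, h9, ← Real.sqrt_mul (by norm_num), ← Real.sqrt_mul (by norm_num),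
    Real.sqrt_le_sqrt_iff (by
      have h1s : (0:ℝ) ≤ 1 - s := by linarith
      nlinarith [mul_nonneg (mul_nonneg hp0.le hs0.le) (div_nonneg h1s hr.le),
        div_nonneg (mul_nonneg hp0.le (by linarith : (0:ℝ) ≤ 1 - p)) hr.le])]
  rw [show 72 * (p * s * (1 - s) / r) = 72 * (p * s * (1 - s)) / r by ring,
    show 9 * (p * (1 - p) / r) = 9 * (p * (1 - p)) / r by ring,
    div_le_div_iff_of_pos_right hr]
  constructor
  · intro h
    have hs7 : s ≤ 1/7 := by nlinarith [mul_pos hp0 (sub_pos.mpr hs1)]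
    nlinarith
  · intro h
    have hs7 : s ≤ 1/7 := by nlinarith
    nlinarith [mul_pos hp0 (sub_pos.mpr hs1), sub_pos.mpr hs1]
end

section
/- Let 0 < p < 1 and r > 0 be reals. The function x ↦ 3p·(√((1/x − 1)/(r/2)) + √((x/p − 1)/(r/2))), defined for p < x < 1, has derivative 0 at x = √p. -/
theorem two_step_error_stationary_in_p₁
    (p r : ℝ) (hp0 : 0 < p) (hp1 : p < 1) (hr : 0 < r) :
    HasDerivAt (fun x : ℝ => 3 * p * (Real.sqrt ((1 / x - 1) / (r / 2))
      + Real.sqrt ((x / p - 1) / (r / 2)))) 0 (Real.sqrt p) := by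
  set s := Real.sqrt p with hsdef
  have hs0 : 0 < s := Real.sqrt_pos.2 hp0
  have hs2 : s ^ 2 = p := Real.sq_sqrt hp0.le
  have hs1 : s < 1 := by
    nlinarith [hs2, hs0]
  have hA : 0 < (1 / s - 1) / (r / 2) := by
    apply div_pos _ (by linarith)
    have : 1 < 1 / s := by
      rw [lt_div_iff₀ hs0]; linarith
    linarith
  have hsp : s / p = 1 / s := by
    rw [div_eq_div_iff hp0.ne' hs0.ne']
    nlinarith [hs2]
  have h1 : HasDerivAt (fun x : ℝ => (1 / x - 1) / (r / 2))
      ((-(s ^ 2)⁻¹) / (r / 2)) s := by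
    simpa [one_div] using ((hasDerivAt_inv hs0.ne').sub_const 1).div_const (r / 2)
  have h2 : HasDerivAt (fun x : ℝ => (x / p - 1) / (r / 2))
      ((1 / p) / (r / 2)) s := by
    simpa using (((hasDerivAt_id s).div_const p).sub_const 1).div_const (r / 2)
  have hq1 := h1.sqrt hA.ne'
  have hq2 := h2.sqrt (by rw [hsp]; exact hA.ne')
  have h := (hq1.add hq2).const_mul (3 * p)
  convert h using 1
  case e'_4 => rfl
  case e'_5 => rfl
  case e'_8 => rfl
  rw [show s / p = 1 / s from hsp, hs2]
  ring
end

section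
/- Let 0 < p < 1 and r > 0 be reals. The function y ↦ 3p·(√((1/√p − 1)/y) + √((√p/p − 1)/(r − y))), defined for 0 < y < r, has derivative 0 at y = r/2. -/
theorem two_step_error_stationary_in_r₁
    (p r : ℝ) (hp0 : 0 < p) (hp1 : p < 1) (hr : 0 < r) :
    HasDerivAt (fun y : ℝ => 3 * p * (Real.sqrt ((1 / Real.sqrt p - 1) / y)
      + Real.sqrt ((Real.sqrt p / p - 1) / (r - y)))) 0 (r / 2) := by
  have hsp : 0 < Real.sqrt p := Real.sqrt_pos.mpr hp0
  have hsp1 : Real.sqrt p < 1 := by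
    nlinarith [Real.sq_sqrt hp0.le, Real.sqrt_nonneg p]
  set a := 1 / Real.sqrt p - 1 with ha
  have ha0 : 0 < a := by
    have h1 : 1 < 1 / Real.sqrt p := by rw [lt_div_iff₀ hsp]; linarith
    rw [ha]; linarith
  have heq : Real.sqrt p / p - 1 = a := by
    have hpe : Real.sqrt p * Real.sqrt p = p := Real.mul_self_sqrt hp0.le
    rw [ha]
    congr 1
    field_simp
    exact Real.sq_sqrt hp0.le
  have hy0 : (0:ℝ) < r / 2 := by linarith
  have hry : r - r / 2 = r / 2 := by ring
  have hx : a / (r / 2) ≠ 0 := by positivity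
  -- derivative of inner a / y
  have h1 : HasDerivAt (fun y : ℝ => a / y) (a * -(((r/2)^2)⁻¹)) (r/2) := by
    simpa [div_eq_mul_inv] using (hasDerivAt_inv hy0.ne').const_mul a
  have hs1 : HasDerivAt (fun y : ℝ => Real.sqrt (a / y))
      ((1 / (2 * Real.sqrt (a / (r/2)))) * (a * -(((r/2)^2)⁻¹))) (r/2) :=
    (Real.hasDerivAt_sqrt hx).comp _ h1
  -- derivative of inner a / (r - y)
  have h2 : HasDerivAt (fun y : ℝ => r - y) (-1) (r/2) :=
    (hasDerivAt_id _).const_sub r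
  have h2' : HasDerivAt (fun y : ℝ => a / (r - y))
      (a * (-(-1) / (r - r/2)^2)) (r/2) := by
    simpa [div_eq_mul_inv] using (h2.inv (by rw [hry]; exact hy0.ne')).const_mul a
  have hx' : a / (r - r/2) ≠ 0 := by rw [hry]; exact hx
  have hs2 : HasDerivAt (fun y : ℝ => Real.sqrt (a / (r - y)))
      ((1 / (2 * Real.sqrt (a / (r - r/2)))) * (a * (-(-1) / (r - r/2)^2))) (r/2) :=
    (Real.hasDerivAt_sqrt hx').comp (r/2) h2'
  have hsum := ((hs1.add hs2).const_mul (3 * p))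
  have hval : 3 * p * ((1 / (2 * Real.sqrt (a / (r/2)))) * (a * -(((r/2)^2)⁻¹))
      + (1 / (2 * Real.sqrt (a / (r - r/2)))) * (a * (-(-1) / (r - r/2)^2))) = 0 := by
    rw [hry]; ring
  rw [hval] at hsum
  simp only [heq]
  exact hsum
end

section
/- Let p > 0, p_L, ε₁, ε₂ be reals with ε₂ ≥ 0 and 0 < ε₁ < p_L. Then for every real p̂_L with |p̂_L − p_L| ≤ ε₁ and every real δ with |δ| ≤ ε₂, one has |(p/p̂_L + δ)·p_L − p| ≤ p·ε₁/(p_L − ε₁) + p_L·ε₂. -/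
theorem iterative_error_bound_general
    (p p_L ε₁ ε₂ : ℝ) (hp : 0 < p) (hε₂ : 0 ≤ ε₂) (hε₁0 : 0 < ε₁)
    (hε₁ : ε₁ < p_L) :
    ∀ phatL : ℝ, |phatL - p_L| ≤ ε₁ → ∀ δ : ℝ, |δ| ≤ ε₂ →
      |(p / phatL + δ) * p_L - p| ≤ p * ε₁ / (p_L - ε₁) + p_L * ε₂ := by
  intro phatL hphat δ hδ
  have habs := abs_le.mp hphat
  have h1 : p_L - ε₁ ≤ phatL := by linarith [habs.1]
  have hph : 0 < phatL := lt_of_lt_of_le (by linarith) h1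
  have hpe : 0 < p_L - ε₁ := by linarith
  have hpL : 0 < p_L := by linarith
  have key : (p / phatL + δ) * p_L - p = p * (p_L - phatL) / phatL + δ * p_L := by
    field_simp; ring
  rw [key]
  have h2 : |p * (p_L - phatL) / phatL| ≤ p * ε₁ / (p_L - ε₁) := by
    rw [abs_div, abs_mul, abs_of_pos hp, abs_of_pos hph]
    have hnum : |p_L - phatL| ≤ ε₁ := by rw [abs_sub_comm]; exact hphat
    gcongr
  have h3 : |δ * p_L| ≤ p_L * ε₂ := by
    rw [abs_mul, abs_of_pos hpL, mul_comm]
    gcongr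
  calc |p * (p_L - phatL) / phatL + δ * p_L| ≤ |p * (p_L - phatL) / phatL| + |δ * p_L| := abs_add_le _ _
    _ ≤ p * ε₁ / (p_L - ε₁) + p_L * ε₂ := add_le_add h2 h3
end

section
/- Let p > 0, p_L, ε₁, ε₂ be reals with ε₂ ≥ 0, 0 < ε₁, and p_L − ε₁ ≥ p. Then for every real p̂_L with |p̂_L − p_L| ≤ ε₁ and every real δ with |δ| ≤ ε₂, one has |(p/p̂_L + δ)·p_L − p| ≤ ε₁ + p_L·ε₂. -/
theorem iterative_error_bound_simplified
    (p p_L ε₁ ε₂ : ℝ) (hp : 0 < p) (hε₂ : 0 ≤ ε₂) (hε₁0 : 0 < ε₁)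
    (hpLp : p ≤ p_L - ε₁) :
    ∀ phatL : ℝ, |phatL - p_L| ≤ ε₁ → ∀ δ : ℝ, |δ| ≤ ε₂ →
      |(p / phatL + δ) * p_L - p| ≤ ε₁ + p_L * ε₂ := by
  intro phatL hphat δ hδ
  have h1 : p_L - ε₁ ≤ phatL := by
    have := abs_le.mp hphat
    linarith [this.1]
  have hphat_pos : 0 < phatL := lt_of_lt_of_le hp (le_trans hpLp h1)
  have hpL_pos : 0 < p_L := by linarith
  have key : (p / phatL + δ) * p_L - p = p * (p_L - phatL) / phatL + δ * p_L := by
    field_simp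
    ring
  rw [key]
  have h2 : |p * (p_L - phatL) / phatL| ≤ ε₁ := by
    rw [abs_div, abs_mul, abs_of_pos hp, abs_of_pos hphat_pos]
    rw [div_le_iff₀ hphat_pos]
    have habs : |p_L - phatL| ≤ ε₁ := by
      rw [abs_sub_comm]; exact hphat
    calc p * |p_L - phatL| ≤ phatL * ε₁ := by
          have : p ≤ phatL := le_trans hpLp h1
          nlinarith [abs_nonneg (p_L - phatL)]
      _ = ε₁ * phatL := by ring
  have h3 : |δ * p_L| ≤ p_L * ε₂ := by
    rw [abs_mul, abs_of_pos hpL_pos]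
    nlinarith
  calc |p * (p_L - phatL) / phatL + δ * p_L| ≤ |p * (p_L - phatL) / phatL| + |δ * p_L| := abs_add_le _ _
    _ ≤ ε₁ + p_L * ε₂ := add_le_add h2 h3
end
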